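/- Let A be an algebra with product ∘ admitting a grading-compatible decomposition φ∘ψ = Σ_p C_p(φ,ψ) with C_p(φ,ψ) of degree j+k-p for φ,ψ of degrees j,k, and suppose there is an anti-automorphism α of (A,∘) with α(φ) = i^{2j}φ on degree-j elements. Then the parity relation C_p(φ,ψ) = (-1)^p C_p(ψ,φ) holds; in particular C₁(φ,ψ) = (1/2)(φ∘ψ - ψ∘φ)'s degree-(j+k-1) part, and if C₀ is commutative and C₁(φ,ψ) - C₁(ψ,φ) = {φ,ψ}, then C₁(φ,ψ) = (1/2){φ,ψ}. -/

import Mathlib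

/-- Let `A = ⊕_{j∈(1/2)ℕ} A[j]` (grading encoded by `n : ℕ`, `n` twice the degree) be a
graded vector space with an associative product `∘` admitting a grading-compatible
decomposition `φ∘ψ = Σ_p C_p(φ,ψ)` with `C_p(φ,ψ)` of degree `j+k-p` for `φ, ψ` of degrees
`j, k`, and suppose there is an anti-automorphism `α` of `(A,∘)` with `α(φ) = i^{2j} φ` on
degree-`j` elements.  Then the parity relation `C_p(φ,ψ) = (-1)^p C_p(ψ,φ)` holds; and if
`C₀` is commutative and `C₁(φ,ψ) - C₁(ψ,φ) = {φ,ψ}` then `C₁(φ,ψ) = (1/2){φ,ψ}`. -/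
theorem stmt_14 (A : Type*) [AddCommGroup A] [Module ℂ A]
    (Adeg : ℕ → Submodule ℂ A)
    (hinternal : DirectSum.IsInternal Adeg)
    (c : A →ₗ[ℂ] A →ₗ[ℂ] A)
    (hassoc : ∀ a b d : A, c (c a b) d = c a (c b d))
    (C : ℕ → A → A → A)
    (hCdeg : ∀ p j k : ℕ, ∀ φ ∈ Adeg j, ∀ ψ ∈ Adeg k, C p φ ψ ∈ Adeg (j + k - 2 * p))
    (hCzero : ∀ p j k : ℕ, j + k < 2 * p → ∀ φ ∈ Adeg j, ∀ ψ ∈ Adeg k, C p φ ψ = 0)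
    (hCsum : ∀ j k : ℕ, ∀ φ ∈ Adeg j, ∀ ψ ∈ Adeg k,
      c φ ψ = ∑ p ∈ Finset.range (j + k + 1), C p φ ψ)
    (hC0comm : ∀ φ ψ : A, C 0 φ ψ = C 0 ψ φ)
    (α : A →ₗ[ℂ] A)
    (hα_anti : ∀ a b : A, α (c a b) = c (α b) (α a))
    (hα_deg : ∀ n : ℕ, ∀ a ∈ Adeg n, α a = (Complex.I ^ n) • a)
    (br : A → A → A)
    (hbr : ∀ j k : ℕ, ∀ φ ∈ Adeg j, ∀ ψ ∈ Adeg k, C 1 φ ψ - C 1 ψ φ = br φ ψ) :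
    (∀ p j k : ℕ, ∀ φ ∈ Adeg j, ∀ ψ ∈ Adeg k,
      C p φ ψ = ((-1 : ℂ) ^ p) • C p ψ φ) ∧
    (∀ j k : ℕ, ∀ φ ∈ Adeg j, ∀ ψ ∈ Adeg k,
      C 1 φ ψ = (1/2 : ℂ) • br φ ψ) := by
  classical
  haveI : DirectSum.Decomposition Adeg := hinternal.chooseDecomposition
  -- projection onto degree n
  set π : ℕ → A →ₗ[ℂ] A := fun n =>
    (Adeg n).subtype ∘ₗ (DirectSum.component ℂ ℕ _ n) ∘ₗ
      (DirectSum.decomposeLinearEquiv Adeg).toLinearMap with hπ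
  have hπ_same : ∀ n : ℕ, ∀ x ∈ Adeg n, π n x = x := by
    intro n x hx
    show ((DirectSum.decompose Adeg x n : Adeg n) : A) = x
    exact DirectSum.decompose_of_mem_same Adeg hx
  have hπ_ne : ∀ m n : ℕ, m ≠ n → ∀ x ∈ Adeg m, π n x = 0 := by
    intro m n hmn x hx
    show ((DirectSum.decompose Adeg x n : Adeg n) : A) = 0
    rw [DirectSum.decompose_of_mem_ne Adeg hx hmn]
  have main : ∀ p j k : ℕ, ∀ φ ∈ Adeg j, ∀ ψ ∈ Adeg k,
      C p φ ψ = ((-1 : ℂ) ^ p) • C p ψ φ := by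
    intro p j k φ hφ ψ hψ
    by_cases hp : j + k < 2 * p
    · rw [hCzero p j k hp φ hφ ψ hψ, hCzero p k j (by omega) ψ hψ φ hφ, smul_zero]
    push_neg at hp
    -- key equation from the anti-automorphism
    have key : ∑ q ∈ Finset.range (j + k + 1), (Complex.I ^ (j + k - 2 * q)) • C q φ ψ
        = ∑ q ∈ Finset.range (j + k + 1), (Complex.I ^ (j + k)) • C q ψ φ := by
      have h1 : α (c φ ψ) = ∑ q ∈ Finset.range (j + k + 1),
          (Complex.I ^ (j + k - 2 * q)) • C q φ ψ := by
        rw [hCsum j k φ hφ ψ hψ, map_sum]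
        refine Finset.sum_congr rfl fun q _ => ?_
        exact hα_deg _ _ (hCdeg q j k φ hφ ψ hψ)
      have h2 : c (α ψ) (α φ) = ∑ q ∈ Finset.range (j + k + 1),
          (Complex.I ^ (j + k)) • C q ψ φ := by
        rw [hα_deg k ψ hψ, hα_deg j φ hφ]
        simp only [map_smul, LinearMap.smul_apply, smul_smul, ← pow_add]
        rw [hCsum k j ψ hψ φ hφ, Finset.smul_sum, show k + j = j + k from by omega]
      rw [← h1, ← h2, hα_anti]
    -- apply the projection π (j + k - 2 * p)
    have hproj := congrArg (π (j + k - 2 * p)) key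
    rw [map_sum, map_sum] at hproj
    have hL : ∀ q ∈ Finset.range (j + k + 1),
        π (j + k - 2 * p) ((Complex.I ^ (j + k - 2 * q)) • C q φ ψ)
        = if q = p then (Complex.I ^ (j + k - 2 * q)) • C q φ ψ else 0 := by
      intro q _
      by_cases hq : q = p
      · subst hq
        simp only [if_pos rfl]
        exact hπ_same _ _ ((Adeg _).smul_mem _ (hCdeg q j k φ hφ ψ hψ))
      · rw [if_neg hq]
        by_cases h2q : j + k < 2 * q
        · rw [hCzero q j k h2q φ hφ ψ hψ, smul_zero, map_zero]
        · exact hπ_ne _ _ (by omega) _ ((Adeg _).smul_mem _ (hCdeg q j k φ hφ ψ hψ))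
    have hR : ∀ q ∈ Finset.range (j + k + 1),
        π (j + k - 2 * p) ((Complex.I ^ (j + k)) • C q ψ φ)
        = if q = p then (Complex.I ^ (j + k)) • C q ψ φ else 0 := by
      intro q _
      have hmem : C q ψ φ ∈ Adeg (j + k - 2 * q) := by
        have := hCdeg q k j ψ hψ φ hφ
        rwa [show k + j = j + k from by omega] at this
      by_cases hq : q = p
      · subst hq
        simp only [if_pos rfl]
        exact hπ_same _ _ ((Adeg _).smul_mem _ hmem)
      · rw [if_neg hq]
        by_cases h2q : j + k < 2 * q
        · rw [hCzero q k j (by omega) ψ hψ φ hφ, smul_zero, map_zero]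
        · exact hπ_ne _ _ (by omega) _ ((Adeg _).smul_mem _ hmem)
    rw [Finset.sum_congr rfl hL, Finset.sum_congr rfl hR,
      Finset.sum_ite_eq' _ p _, Finset.sum_ite_eq' _ p _,
      if_pos (Finset.mem_range.mpr (by omega)), if_pos (Finset.mem_range.mpr (by omega))]
        at hproj
    -- now extract the result
    have hI : (Complex.I : ℂ) ^ (j + k) = Complex.I ^ (j + k - 2 * p) * (-1 : ℂ) ^ p := by
      rw [show (-1 : ℂ) ^ p = (Complex.I ^ 2) ^ p from by rw [Complex.I_sq],
        ← pow_mul, ← pow_add]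
      congr 1
      omega
    rw [hI, mul_comm, mul_smul] at hproj
    exact smul_right_injective A (pow_ne_zero _ Complex.I_ne_zero) hproj
  refine ⟨main, fun j k φ hφ ψ hψ => ?_⟩
  have h1 := main 1 j k φ hφ ψ hψ
  rw [pow_one, neg_one_smul] at h1
  have h2 := hbr j k φ hφ ψ hψ
  have h3 : br φ ψ = (-2 : ℂ) • C 1 ψ φ := by rw [← h2, h1]; module
  rw [h1, h3, smul_smul]
  norm_num
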